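/- Let T_m denote the number of game walks of length m, and let t = Σ_{m ≥ 1} T_m z^m be the associated formal power series (over the integers, with constant term 0). Then t satisfies the identity z·t^4 + t^2 − (1+z)·t + z = 0 in the ring of formal power series. -/

import Mathlib

/-- A game walk: a finite sequence of integers each equal to `1` or at most
`-3`, all of whose partial sums are at least `1`, and whose total sum is `1`. -/
def IsGameWalk (D : List ℤ) : Prop :=
  (∀ d ∈ D, d = 1 ∨ d ≤ -3) ∧
  (∀ k, 1 ≤ k → k ≤ D.length → 1 ≤ (D.take k).sum) ∧
  D.sum = 1

/-- `T m` is the number of game walks of length `m`. -/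
noncomputable def T (m : ℕ) : ℕ :=
  Nat.card {D : List ℤ // D.length = m ∧ IsGameWalk D}
/-- The generating function of the numbers of game walks, as a formal power
series over `ℤ` with constant term `0`. -/
noncomputable def t : PowerSeries ℤ :=
  PowerSeries.mk fun m => if m = 0 then 0 else (T m : ℤ)

namespace GameWalkAux

/-- A reversed walk to height `h`. -/
def RW (h : ℤ) (R : List ℤ) : Prop :=
  (∀ d ∈ R, d = 1 ∨ d ≤ -3) ∧ (∀ j < R.length, (R.take j).sum ≤ h - 1) ∧ R.sum = h

lemma rw_nil {h : ℤ} : RW h ([] : List ℤ) ↔ h = 0 := by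
  simp [RW, eq_comm]

lemma rw_cons {h d : ℤ} {R : List ℤ} :
    RW h (d :: R) ↔ (d = 1 ∨ d ≤ -3) ∧ 1 ≤ h ∧ RW (h - d) R := by
  constructor
  · rintro ⟨hs, hp, hsum⟩
    have h0 := hp 0 (by simp)
    simp only [List.take_zero, List.sum_nil] at h0
    refine ⟨hs d (by simp), by omega, fun e he => hs e (by simp [he]), ?_, ?_⟩
    · intro j hj
      have := hp (j + 1) (by simp; omega)
      simp only [List.take_succ_cons, List.sum_cons] at this
      omega
    · simp only [List.sum_cons] at hsum; omega
  · rintro ⟨hd, hh, hs', hp', hsum'⟩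
    refine ⟨?_, ?_, ?_⟩
    · rintro e he
      rcases List.mem_cons.1 he with rfl | he'
      · exact hd
      · exact hs' e he'
    · intro j hj
      cases j with
      | zero => simpa using hh
      | succ i =>
        have : i < R.length := by simpa using hj
        have := hp' i this
        simp only [List.take_succ_cons, List.sum_cons]
        omega
    · simp only [List.sum_cons]; omega

lemma rw_sum_le {R : List ℤ} (hs : ∀ d ∈ R, d = 1 ∨ d ≤ -3) :
    R.sum ≤ R.length := by
  induction R with
  | nil => simp
  | cons d R ih =>
    have hd := hs d (by simp)
    have := ih (fun e he => hs e (by simp [he]))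
    simp only [List.sum_cons, List.length_cons]
    push_cast
    omega

lemma rw_entry_bounds {h : ℤ} {m : ℕ} {R : List ℤ} (hR : RW h R) (hlen : R.length = m) :
    ∀ d ∈ R, d ∈ Set.Icc (h - m + 1) 1 := by
  intro d hd
  obtain ⟨a, b, rfl⟩ := List.append_of_mem hd
  obtain ⟨hs, -, hsum⟩ := hR
  have hd1 : d = 1 ∨ d ≤ -3 := hs d hd
  have ha : a.sum ≤ a.length := rw_sum_le (fun e he => hs e (by simp [he]))
  have hb : b.sum ≤ b.length := rw_sum_le (fun e he => hs e (by simp [he]))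
  have hsum' : a.sum + (d + b.sum) = h := by
    simpa [List.sum_append] using hsum
  have hlen' : (a.length : ℤ) + 1 + b.length = m := by
    rw [← hlen]; simp; push_cast; ring
  constructor <;> omega

lemma rw_finite (h : ℤ) (m : ℕ) : {R : List ℤ | R.length = m ∧ RW h R}.Finite := by
  have hsub : {R : List ℤ | R.length = m ∧ RW h R} ⊆
      (fun l : List (Set.Icc (h - m + 1) (1 : ℤ)) => l.map Subtype.val) ''
        {l | l.length = m} := by
    rintro R ⟨hlen, hR⟩
    refine ⟨R.attach.map (fun x => ⟨x.1, rw_entry_bounds hR hlen x.1 x.2⟩), by simp [hlen], ?_⟩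
    simp [List.map_map, Function.comp]
  exact Set.Finite.subset ((List.finite_length_eq _ m).image _) hsub

/-- The finset of reversed walks to `h` of length `m`. -/
noncomputable def FW (h : ℤ) (m : ℕ) : Finset (List ℤ) := (rw_finite h m).toFinset

lemma mem_FW {h : ℤ} {m : ℕ} {R : List ℤ} : R ∈ FW h m ↔ R.length = m ∧ RW h R :=
  Set.Finite.mem_toFinset _


/-- First passage splitting: splits off the shortest prefix whose running sum
(started at `s`) reaches `1`. -/
def fp (s : ℤ) : List ℤ → List ℤ × List ℤ
  | [] => ([], [])
  | d :: R => if 1 ≤ s + d then ([d], R)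
      else ((d :: (fp (s + d) R).1), (fp (s + d) R).2)

lemma fp_spec {h : ℤ} (hh : 1 ≤ h) :
    ∀ (R : List ℤ) (s : ℤ), s ≤ 0 → (∀ d ∈ R, d = 1 ∨ d ≤ -3) →
    (∀ j < R.length, s + (R.take j).sum ≤ h) → s + R.sum = h + 1 →
    (fp s R).1 ++ (fp s R).2 = R ∧ s + (fp s R).1.sum = 1 ∧
    (∀ j < (fp s R).1.length, s + ((fp s R).1.take j).sum ≤ 0) ∧ RW h (fp s R).2 := by
  intro R
  induction R with
  | nil =>
    intro s hs _ _ hsum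
    simp only [List.sum_nil] at hsum
    omega
  | cons d R ih =>
    intro s hs hsteps hpre hsum
    simp only [List.sum_cons] at hsum
    by_cases hcase : 1 ≤ s + d
    · have hd1 : d = 1 ∨ d ≤ -3 := hsteps d (by simp)
      have hsd : s + d = 1 := by omega
      simp only [fp, if_pos hcase]
      refine ⟨by simp, by simpa using hsd, ?_, ?_, ?_, ?_⟩
      · intro j hj
        have hj0 : j = 0 := by simpa using hj
        subst hj0
        simpa using hs
      · exact fun e he => hsteps e (by simp [he])
      · intro j hj
        have := hpre (j + 1) (by simp; omega)
        simp only [List.take_succ_cons, List.sum_cons] at this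
        omega
      · omega
    · have hs' : s + d ≤ 0 := by omega
      have hpre' : ∀ j < R.length, (s + d) + (R.take j).sum ≤ h := by
        intro j hj
        have := hpre (j + 1) (by simp; omega)
        simp only [List.take_succ_cons, List.sum_cons] at this
        omega
      obtain ⟨h1, h2, h3, h4⟩ := ih (s + d) hs' (fun e he => hsteps e (by simp [he]))
        hpre' (by omega)
      simp only [fp, if_neg hcase]
      refine ⟨by simpa using h1, by simp; omega, ?_, h4⟩
      intro j hj
      cases j with
      | zero => simpa using hs
      | succ i =>
        have hi : i < (fp (s + d) R).1.length := by simpa using hj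
        have := h3 i hi
        simp only [List.take_succ_cons, List.sum_cons]
        omega

lemma fp_append :
    ∀ (B : List ℤ) (s : ℤ) (A : List ℤ), B ≠ [] → s + B.sum = 1 →
    (∀ j < B.length, s + (B.take j).sum ≤ 0) → fp s (B ++ A) = (B, A) := by
  intro B
  induction B with
  | nil => intro s A hne; exact absurd rfl hne
  | cons d B ih =>
    intro s A _ hsum hpre
    simp only [List.sum_cons] at hsum
    by_cases hB : B = []
    · subst hB
      simp only [List.sum_nil, add_zero] at hsum
      simp [fp, show (1:ℤ) ≤ s + d by omega]
    · have hd : s + d ≤ 0 := by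
        have h1 : (1:ℕ) < (d :: B).length := by
          have := List.length_pos_iff.2 hB
          simp only [List.length_cons]
          omega
        have := hpre 1 h1
        simpa using this
      have hpre' : ∀ j < B.length, (s + d) + (B.take j).sum ≤ 0 := by
        intro j hj
        have := hpre (j + 1) (by simp; omega)
        simp only [List.take_succ_cons, List.sum_cons] at this
        omega
      have := ih (s + d) A hB (by omega) hpre'
      simp [fp, show ¬ (1:ℤ) ≤ s + d by omega, this]

lemma rw_ne_nil {h : ℤ} {R : List ℤ} (hR : RW h R) (hh : h ≠ 0) : R ≠ [] := by
  rintro rfl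
  exact hh (rw_nil.1 hR)

lemma rw_append {h₀ h : ℤ} {B A : List ℤ} (hB : RW h₀ B) (hA : RW h A) (hh : 1 ≤ h) :
    RW (h + h₀) (B ++ A) := by
  induction B generalizing h₀ with
  | nil =>
    have : h₀ = 0 := rw_nil.1 hB
    subst this
    simpa using hA
  | cons d B ih =>
    rw [rw_cons] at hB
    obtain ⟨hd, hh₀, hB'⟩ := hB
    have hR := ih hB'
    rw [List.cons_append, rw_cons]
    refine ⟨hd, by omega, ?_⟩
    have : h + h₀ - d = h + (h₀ - d) := by ring
    rw [this]
    exact hR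


lemma fw_one_props {B : List ℤ} (hB : RW 1 B) :
    B ≠ [] ∧ 0 + B.sum = 1 ∧ (∀ j < B.length, 0 + (B.take j).sum ≤ 0) := by
  obtain ⟨hs, hp, hsum⟩ := hB
  refine ⟨rw_ne_nil ⟨hs, hp, hsum⟩ one_ne_zero, by omega, ?_⟩
  intro j hj
  have := hp j hj
  omega

lemma FW_succ {h : ℤ} (hh : 1 ≤ h) (m : ℕ) :
    FW (h + 1) m = (Finset.HasAntidiagonal.antidiagonal m).biUnion
      (fun p => ((FW 1 p.1) ×ˢ (FW h p.2)).image (fun q => q.1 ++ q.2)) := by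
  ext R
  rw [mem_FW, Finset.mem_biUnion]
  constructor
  · rintro ⟨hlen, hs, hp, hsum⟩
    obtain ⟨h1, h2, h3, h4⟩ := fp_spec hh R 0 le_rfl hs
      (fun j hj => by have := hp j hj; omega) (by omega)
    set B := (fp 0 R).1 with hBdef
    set A := (fp 0 R).2 with hAdef
    have hBsteps : ∀ d ∈ B, d = 1 ∨ d ≤ -3 := by
      intro d hd
      exact hs d (by rw [← h1]; exact List.mem_append_left _ hd)
    have hB : RW 1 B := ⟨hBsteps, fun j hj => by have := h3 j hj; omega, by omega⟩
    refine ⟨(B.length, A.length), ?_, ?_⟩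
    · rw [Finset.HasAntidiagonal.mem_antidiagonal]
      simpa [← List.length_append, h1] using hlen
    · rw [Finset.mem_image]
      exact ⟨(B, A), Finset.mem_product.2 ⟨mem_FW.2 ⟨rfl, hB⟩, mem_FW.2 ⟨rfl, h4⟩⟩, h1⟩
  · rintro ⟨p, hp, hR⟩
    rw [Finset.mem_image] at hR
    obtain ⟨⟨B, A⟩, hBA, rfl⟩ := hR
    rw [Finset.mem_product] at hBA
    obtain ⟨hBlen, hB⟩ := mem_FW.1 hBA.1
    obtain ⟨hAlen, hA⟩ := mem_FW.1 hBA.2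
    rw [Finset.HasAntidiagonal.mem_antidiagonal] at hp
    refine ⟨by simp [hBlen, hAlen, hp], ?_⟩
    exact rw_append hB hA hh

lemma card_FW_succ {h : ℤ} (hh : 1 ≤ h) (m : ℕ) :
    (FW (h + 1) m).card
      = ∑ p ∈ Finset.HasAntidiagonal.antidiagonal m, (FW 1 p.1).card * (FW h p.2).card := by
  rw [FW_succ hh m, Finset.card_biUnion]
  · refine Finset.sum_congr rfl ?_
    rintro ⟨i, j⟩ hij
    rw [Finset.card_image_of_injOn, Finset.card_product]
    rintro ⟨B, A⟩ hBA ⟨B', A'⟩ hBA' heq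
    simp only [Finset.coe_product, Set.mem_prod, Finset.mem_coe] at hBA hBA'
    have hBlen : B.length = i := (mem_FW.1 hBA.1).1
    have hBlen' : B'.length = i := (mem_FW.1 hBA'.1).1
    obtain ⟨e1, e2⟩ := List.append_inj heq (hBlen.trans hBlen'.symm)
    simp only [Prod.mk.injEq]
    exact ⟨e1, e2⟩
  · rintro ⟨i, j⟩ hij ⟨i', j'⟩ hij' hne
    simp only [Function.onFun]
    rw [Finset.disjoint_left]
    rintro R hR hR'
    rw [Finset.mem_image] at hR hR'
    obtain ⟨⟨B, A⟩, hBA, rfl⟩ := hR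
    obtain ⟨⟨B', A'⟩, hBA', heq⟩ := hR'
    rw [Finset.mem_product] at hBA hBA'
    obtain ⟨hB1, hB2⟩ := hBA
    obtain ⟨hB1', hB2'⟩ := hBA'
    obtain ⟨hBlen, hB⟩ := mem_FW.1 hB1
    obtain ⟨hAlen, hA⟩ := mem_FW.1 hB2
    obtain ⟨hBlen', hB'⟩ := mem_FW.1 hB1'
    obtain ⟨hAlen', hA'⟩ := mem_FW.1 hB2'
    obtain ⟨hne1, hsum1, hpre1⟩ := fw_one_props hB
    obtain ⟨hne1', hsum1', hpre1'⟩ := fw_one_props hB'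
    have e1 : fp 0 (B ++ A) = (B, A) := fp_append B 0 A hne1 hsum1 hpre1
    have e2 : fp 0 (B' ++ A') = (B', A') := fp_append B' 0 A' hne1' hsum1' hpre1'
    have heq' : B' ++ A' = B ++ A := heq
    rw [heq', e1] at e2
    apply hne
    have eB : B = B' := congrArg Prod.fst e2
    have eA : A = A' := congrArg Prod.snd e2
    dsimp only at hBlen hBlen' hAlen hAlen'
    simp only [Prod.mk.injEq]
    exact ⟨by rw [← hBlen, ← hBlen', eB], by rw [← hAlen, ← hAlen', eA]⟩


lemma fw_cons_mem {h d : ℤ} {R : List ℤ} {n : ℕ} (hn : 1 ≤ n)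
    (hd : d = 1 ∨ d ≤ -3) (hR : R ∈ FW (h - d) (n - 1)) (hh : 1 ≤ h) :
    d :: R ∈ FW h n := by
  obtain ⟨hlen, hRW⟩ := mem_FW.1 hR
  refine mem_FW.2 ⟨by simp [hlen]; omega, rw_cons.2 ⟨hd, hh, hRW⟩⟩

lemma fw_dest {h : ℤ} {R : List ℤ} {n : ℕ} (hn : 1 ≤ n) (hR : R ∈ FW h n) :
    R.headI :: R.tail = R ∧ (R.headI = 1 ∨ R.headI ≤ -3) ∧ 1 ≤ h ∧
      R.tail ∈ FW (h - R.headI) (n - 1) := by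
  obtain ⟨hlen, hRW⟩ := mem_FW.1 hR
  have hne : R ≠ [] := by
    rintro rfl; simp at hlen; omega
  obtain ⟨d, R₀, rfl⟩ := List.exists_cons_of_ne_nil hne
  obtain ⟨h1, h2, h3⟩ := rw_cons.1 hRW
  simp only [List.length_cons] at hlen
  exact ⟨rfl, h1, h2, mem_FW.2 ⟨by simp; omega, h3⟩⟩

lemma card_head_one {n : ℕ} (hn : 1 ≤ n) :
    ((FW 2 n).filter (fun R => R.headI = 1)).card = (FW 1 (n - 1)).card := by
  apply Finset.card_nbij' (i := List.tail) (j := fun S => 1 :: S)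
  · intro R hR
    obtain ⟨hR, hhead⟩ := Finset.mem_filter.1 hR
    obtain ⟨-, -, -, h4⟩ := fw_dest hn hR
    rw [hhead] at h4
    norm_num at h4
    exact h4
  · intro S hS
    rw [Finset.mem_coe, Finset.mem_filter]
    refine ⟨fw_cons_mem hn (Or.inl rfl) (by norm_num; exact hS) (by norm_num), by simp⟩
  · intro R hR
    obtain ⟨hR, hhead⟩ := Finset.mem_filter.1 hR
    obtain ⟨h1, -, -, -⟩ := fw_dest hn hR
    rw [← hhead]
    exact h1
  · intro S hS
    simp


lemma card_head_down {n : ℕ} (hn : 1 ≤ n) :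
    ((FW 2 n).filter (fun R => R.headI ≠ 1)).card
      = ((FW 1 n).filter (fun R => R.headI ≤ -4)).card := by
  apply Finset.card_nbij' (i := fun R => (R.headI - 1) :: R.tail)
    (j := fun S => (S.headI + 1) :: S.tail)
  · intro R hR
    obtain ⟨hR, hhead⟩ := Finset.mem_filter.1 hR
    obtain ⟨h1, h2, -, h4⟩ := fw_dest hn hR
    have hd : R.headI ≤ -3 := by rcases h2 with h | h; exact absurd h hhead; exact h
    rw [Finset.mem_coe, Finset.mem_filter]
    constructor
    · refine fw_cons_mem hn (Or.inr (by omega)) ?_ (by norm_num)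
      have : (1 : ℤ) - (R.headI - 1) = 2 - R.headI := by ring
      rw [this]
      exact h4
    · simp only [List.headI_cons]
      omega
  · intro S hS
    obtain ⟨hS, hhead⟩ := Finset.mem_filter.1 hS
    obtain ⟨h1, h2, -, h4⟩ := fw_dest hn hS
    rw [Finset.mem_coe, Finset.mem_filter]
    constructor
    · refine fw_cons_mem hn (Or.inr (by omega)) ?_ (by norm_num)
      have : (2 : ℤ) - (S.headI + 1) = 1 - S.headI := by ring
      rw [this]
      exact h4
    · simp only [List.headI_cons]
      omega
  · intro R hR
    obtain ⟨hR, hhead⟩ := Finset.mem_filter.1 hR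
    obtain ⟨h1, -, -, -⟩ := fw_dest hn hR
    simp only [List.headI_cons, List.tail_cons]
    rw [sub_add_cancel]
    exact h1
  · intro S hS
    obtain ⟨hS, hhead⟩ := Finset.mem_filter.1 hS
    obtain ⟨h1, -, -, -⟩ := fw_dest hn hS
    simp only [List.headI_cons, List.tail_cons]
    rw [add_sub_cancel_right]
    exact h1

lemma card_head_three {n : ℕ} (hn : 1 ≤ n) :
    ((FW 1 n).filter (fun R => R.headI = -3)).card = (FW 4 (n - 1)).card := by
  apply Finset.card_nbij' (i := List.tail) (j := fun S => (-3) :: S)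
  · intro R hR
    obtain ⟨hR, hhead⟩ := Finset.mem_filter.1 hR
    obtain ⟨-, -, -, h4⟩ := fw_dest hn hR
    rw [hhead] at h4
    norm_num at h4
    exact h4
  · intro S hS
    rw [Finset.mem_coe, Finset.mem_filter]
    refine ⟨fw_cons_mem hn (Or.inr (by norm_num)) (by norm_num; exact hS) (by norm_num),
      by simp⟩
  · intro R hR
    obtain ⟨hR, hhead⟩ := Finset.mem_filter.1 hR
    obtain ⟨h1, -, -, -⟩ := fw_dest hn hR
    rw [← hhead]
    exact h1
  · intro S hS
    simp

lemma filter_head_one {n : ℕ} (hn : 1 ≤ n) :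
    ((FW 1 n).filter (fun R => R.headI = 1)).card = if n = 1 then 1 else 0 := by
  have key : ∀ R ∈ (FW 1 n).filter (fun R => R.headI = 1), R = [1] ∧ n = 1 := by
    intro R hR
    obtain ⟨hR, hhead⟩ := Finset.mem_filter.1 hR
    obtain ⟨h1, -, -, h4⟩ := fw_dest hn hR
    rw [hhead] at h4
    norm_num at h4
    obtain ⟨hlen, hRW⟩ := mem_FW.1 h4
    have htl : R.tail = [] := by
      cases htl : R.tail with
      | nil => rfl
      | cons d R₀ =>
        exfalso
        rw [htl] at hRW
        obtain ⟨-, hle, -⟩ := rw_cons.1 hRW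
        omega
    have hR1 : R = [1] := by rw [← h1, htl, hhead]
    refine ⟨hR1, ?_⟩
    obtain ⟨hlen', -⟩ := mem_FW.1 hR
    rw [hR1] at hlen'
    simpa using hlen'.symm
  by_cases h1 : n = 1
  · subst h1
    rw [if_pos rfl]
    apply Finset.card_eq_one.2
    refine ⟨[1], ?_⟩
    apply Finset.eq_singleton_iff_unique_mem.2
    constructor
    · rw [Finset.mem_filter]
      refine ⟨mem_FW.2 ⟨rfl, rw_cons.2 ⟨Or.inl rfl, le_refl 1, by norm_num [rw_nil]⟩⟩, rfl⟩
    · intro R hR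
      exact (key R hR).1
  · rw [if_neg h1]
    apply Finset.card_eq_zero.2
    apply Finset.eq_empty_of_forall_notMem
    intro R hR
    exact h1 (key R hR).2

lemma key_count {n : ℕ} (hn : 1 ≤ n) :
    (FW 1 n).card + (FW 1 (n - 1)).card
      = (if n = 1 then 1 else 0) + (FW 2 n).card + (FW 4 (n - 1)).card := by
  have s1 : ((FW 1 n).filter (fun R => R.headI = 1)).card
      + ((FW 1 n).filter (fun R => ¬ R.headI = 1)).card = (FW 1 n).card :=
    Finset.card_filter_add_card_filter_not _
  have s2 : ((FW 2 n).filter (fun R => R.headI = 1)).card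
      + ((FW 2 n).filter (fun R => ¬ R.headI = 1)).card = (FW 2 n).card :=
    Finset.card_filter_add_card_filter_not _
  have s3 : (((FW 1 n).filter (fun R => ¬ R.headI = 1)).filter
        (fun R => R.headI = -3)).card
      + (((FW 1 n).filter (fun R => ¬ R.headI = 1)).filter
        (fun R => ¬ R.headI = -3)).card
      = ((FW 1 n).filter (fun R => ¬ R.headI = 1)).card :=
    Finset.card_filter_add_card_filter_not _
  have e3 : ((FW 1 n).filter (fun R => ¬ R.headI = 1)).filter (fun R => R.headI = -3)
      = (FW 1 n).filter (fun R => R.headI = -3) := by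
    rw [Finset.filter_filter]
    apply Finset.filter_congr
    intro R hR
    constructor
    · rintro ⟨-, h⟩; exact h
    · intro h; exact ⟨by omega, h⟩
  have e4 : ((FW 1 n).filter (fun R => ¬ R.headI = 1)).filter (fun R => ¬ R.headI = -3)
      = (FW 1 n).filter (fun R => R.headI ≤ -4) := by
    rw [Finset.filter_filter]
    apply Finset.filter_congr
    intro R hR
    obtain ⟨-, h2, -, -⟩ := fw_dest hn hR
    constructor
    · rintro ⟨ha, hb⟩; omega
    · intro h; omega
  rw [e3, e4] at s3
  rw [card_head_one hn, card_head_down hn] at s2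
  rw [card_head_three hn] at s3
  rw [filter_head_one hn] at s1
  omega


lemma gamewalk_iff {D : List ℤ} : IsGameWalk D ↔ RW 1 D.reverse := by
  have hsplit : ∀ k, (D.take k).sum + (D.drop k).sum = D.sum := by
    intro k
    rw [← List.sum_append, List.take_append_drop]
  constructor
  · rintro ⟨hs, hp, h1⟩
    refine ⟨fun d hd => hs d (List.mem_reverse.1 hd), ?_, by rw [List.sum_reverse, h1]⟩
    intro j hj
    rw [List.length_reverse] at hj
    rw [List.take_reverse, List.sum_reverse]
    have hk1 : 1 ≤ D.length - j := by omega
    have hk2 : D.length - j ≤ D.length := by omega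
    have h2 := hp (D.length - j) hk1 hk2
    have h3 := hsplit (D.length - j)
    omega
  · rintro ⟨hs, hp, h1⟩
    rw [List.sum_reverse] at h1
    refine ⟨fun d hd => hs d (List.mem_reverse.2 hd), ?_, h1⟩
    intro k hk1 hk2
    have hj : D.length - k < D.reverse.length := by
      rw [List.length_reverse]; omega
    have h2 := hp (D.length - k) hj
    rw [List.take_reverse, List.sum_reverse] at h2
    have hkk : D.length - (D.length - k) = k := by omega
    rw [hkk] at h2
    have h3 := hsplit k
    omega

lemma T_eq (n : ℕ) : T n = (FW 1 n).card := by
  rw [T]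
  have e : {D : List ℤ // D.length = n ∧ IsGameWalk D}
      ≃ {R : List ℤ // R.length = n ∧ RW 1 R} :=
    { toFun := fun x => ⟨x.1.reverse, by simp [x.2.1], gamewalk_iff.1 x.2.2⟩
      invFun := fun x => ⟨x.1.reverse, by simp [x.2.1], by
        rw [gamewalk_iff, List.reverse_reverse]; exact x.2.2⟩
      left_inv := fun x => by simp
      right_inv := fun x => by simp }
  rw [Nat.card_congr e]
  have : Nat.card {R : List ℤ // R.length = n ∧ RW 1 R}
      = ({R : List ℤ | R.length = n ∧ RW 1 R}).ncard := Nat.card_coe_set_eq _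
  rw [this, Set.ncard_eq_toFinset_card _ (rw_finite 1 n)]
  rfl

/-- The generating function of reversed walks to `h`. -/
noncomputable def u (h : ℤ) : PowerSeries ℤ :=
  PowerSeries.mk fun m => ((FW h m).card : ℤ)

lemma u_mul {h : ℤ} (hh : 1 ≤ h) : u (h + 1) = u 1 * u h := by
  ext n
  rw [PowerSeries.coeff_mul]
  simp only [u, PowerSeries.coeff_mk]
  rw [card_FW_succ hh]
  push_cast
  rfl

lemma t_eq : t = u 1 := by
  ext n
  simp only [t, u, PowerSeries.coeff_mk]
  by_cases hn : n = 0
  · subst hn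
    rw [if_pos rfl]
    have : FW 1 0 = ∅ := by
      apply Finset.eq_empty_of_forall_notMem
      intro R hR
      obtain ⟨hlen, hRW⟩ := mem_FW.1 hR
      rw [List.length_eq_zero_iff] at hlen
      subst hlen
      exact one_ne_zero (rw_nil.1 hRW)
    simp [this]
  · rw [if_neg hn, T_eq]

lemma fw_two_zero : FW 2 0 = ∅ := by
  apply Finset.eq_empty_of_forall_notMem
  intro R hR
  obtain ⟨hlen, hRW⟩ := mem_FW.1 hR
  rw [List.length_eq_zero_iff] at hlen
  subst hlen
  have := rw_nil.1 hRW
  norm_num at this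

lemma fw_one_zero : FW 1 0 = ∅ := by
  apply Finset.eq_empty_of_forall_notMem
  intro R hR
  obtain ⟨hlen, hRW⟩ := mem_FW.1 hR
  rw [List.length_eq_zero_iff] at hlen
  subst hlen
  exact one_ne_zero (rw_nil.1 hRW)

lemma key_series :
    u 1 + PowerSeries.X * u 1 = PowerSeries.X + u 2 + PowerSeries.X * u 4 := by
  ext n
  simp only [map_add]
  cases n with
  | zero =>
    rw [PowerSeries.coeff_zero_X_mul, PowerSeries.coeff_zero_X_mul]
    simp only [u, PowerSeries.coeff_mk, fw_one_zero, fw_two_zero, Finset.card_empty]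
    simp [PowerSeries.coeff_zero_X]
  | succ n =>
    rw [PowerSeries.coeff_succ_X_mul, PowerSeries.coeff_succ_X_mul]
    simp only [u, PowerSeries.coeff_mk, PowerSeries.coeff_X]
    have hk := key_count (n := n + 1) (by omega)
    have hsub : n + 1 - 1 = n := by omega
    rw [hsub] at hk
    by_cases h1 : n + 1 = 1
    · rw [if_pos h1] at hk ⊢
      push_cast at hk ⊢
      omega
    · rw [if_neg h1] at hk ⊢
      push_cast at hk ⊢
      omega

end GameWalkAux

theorem gameWalk_gf_equation :
    PowerSeries.X * t ^ 4 + t ^ 2 - (1 + PowerSeries.X) * t + PowerSeries.X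
      = 0 := by
  have e2 : GameWalkAux.u 2 = GameWalkAux.u 1 * GameWalkAux.u 1 := by
    have := GameWalkAux.u_mul (h := 1) le_rfl
    norm_num at this
    exact this
  have e3 : GameWalkAux.u 3 = GameWalkAux.u 1 * GameWalkAux.u 2 := by
    have := GameWalkAux.u_mul (h := 2) (by norm_num)
    norm_num at this
    exact this
  have e4 : GameWalkAux.u 4 = GameWalkAux.u 1 * GameWalkAux.u 3 := by
    have := GameWalkAux.u_mul (h := 3) (by norm_num)
    norm_num at this
    exact this
  have key := GameWalkAux.key_series
  rw [e4, e3, e2] at key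
  rw [GameWalkAux.t_eq]
  linear_combination -key
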